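/- Let ε ∈ ℂⁿ and let ε₀, ε₋, ε₊ ∈ M(n,ℂ) satisfy the hermiticity conditions ε₀* = ε₀, ε₋ᵗ = ε₋, ε₊ᵗ = ε₊, and ε₊ = conj(ε₋) (equivalently ε₊* = ε₋). Let W : ℝ → M(n,ℂ) and z : ℝ → ℂⁿ be differentiable, with W(t) symmetric and 1_n − W(t)·conj(W(t)) invertible for all t, satisfying the coupled system i W′ = ε₋ + (Wε₀)^s + W ε₊ W and i z′ = ε + W ε̄ + (1/2) ε₀ᵗ z + W ε₊ z, where (A)^s = (A + Aᵗ)/2. Then the function η(t) := (1_n − W W̄)⁻¹(z + W z̄) satisfies the decoupled linear equation i η′ = ε + ε₋ η̄ + (1/2) ε₀ᵗ η, whose coefficients do not involve W. (Thus under the FC-transform the motion in η decouples from the Riccati motion on the Siegel ball.) -/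

import Mathlib

open Matrix

attribute [local instance] Matrix.normedAddCommGroup Matrix.normedSpace

variable {n : ℕ}

lemma hasDerivAt_pi_gen {ι : Type*} [Fintype ι] {E : Type*} [NormedAddCommGroup E]
    [NormedSpace ℝ E] {f : ℝ → (ι → E)} {f' : ι → E} {t : ℝ} :
    HasDerivAt f f' t ↔ ∀ i, HasDerivAt (fun s => f s i) (f' i) t := by
  exact hasDerivAt_pi

lemma hasDerivAt_pi_mat {f : ℝ → Matrix (Fin n) (Fin n) ℂ} {f' : Matrix (Fin n) (Fin n) ℂ} {t : ℝ} :
    HasDerivAt f f' t ↔ ∀ i j, HasDerivAt (fun s => f s i j) (f' i j) t := by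
  constructor
  · intro h i j
    have h1 : HasDerivAt (fun s => f s i) (f' i) t :=
      (hasDerivAt_pi_gen (f := fun s => (f s : Fin n → Fin n → ℂ))).1 h i
    exact hasDerivAt_pi_gen.1 h1 j
  · intro h
    exact (hasDerivAt_pi_gen (f := fun s => (f s : Fin n → Fin n → ℂ))).2
      fun i => hasDerivAt_pi_gen.2 (h i)

lemma differentiableAt_det_comp {A : ℝ → Matrix (Fin n) (Fin n) ℂ} {t : ℝ}
    (h : ∀ i j, DifferentiableAt ℝ (fun s => A s i j) t) :
    DifferentiableAt ℝ (fun s => (A s).det) t := by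
  simp only [Matrix.det_apply']
  exact DifferentiableAt.fun_sum fun σ _ =>
    (DifferentiableAt.fun_finsetProd (fun i _ => h (σ i) i)).const_mul _

lemma differentiableAt_inv_entry {A : ℝ → Matrix (Fin n) (Fin n) ℂ} {t : ℝ}
    (h : ∀ i j, DifferentiableAt ℝ (fun s => A s i j) t)
    (hu : IsUnit (A t)) (i j : Fin n) :
    DifferentiableAt ℝ (fun s => (A s)⁻¹ i j) t := by
  have hdet : DifferentiableAt ℝ (fun s => (A s).det) t := differentiableAt_det_comp h
  have hne : (A t).det ≠ 0 := by
    have := (Matrix.isUnit_iff_isUnit_det (A t)).1 hu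
    exact IsUnit.ne_zero this
  have hadj : DifferentiableAt ℝ (fun s => (A s).adjugate i j) t := by
    simp only [Matrix.adjugate_apply]
    apply differentiableAt_det_comp
    intro i' j'
    simp only [Matrix.updateRow_apply]
    by_cases hij : i' = j
    · simp [hij]
    · simpa [hij] using h i' j'
  have : (fun s => (A s)⁻¹ i j) = fun s => ((A s).det)⁻¹ * (A s).adjugate i j := by
    funext s
    rw [Matrix.inv_def, Matrix.smul_apply, Ring.inverse_eq_inv, smul_eq_mul]
  rw [this]
  exact (hdet.inv hne).mul hadj

lemma hasDerivAt_inv_mat {A A' : ℝ → Matrix (Fin n) (Fin n) ℂ} {t : ℝ}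
    (hd : ∀ s, HasDerivAt A (A' s) s) (hu : ∀ s, IsUnit (A s)) :
    HasDerivAt (fun s => (A s)⁻¹) (-((A t)⁻¹ * A' t * (A t)⁻¹)) t := by
  have hent : ∀ s i j, HasDerivAt (fun s' => A s' i j) (A' s i j) s :=
    fun s => hasDerivAt_pi_mat.1 (hd s)
  have hNdiff : ∀ i j s, DifferentiableAt ℝ (fun s' => (A s')⁻¹ i j) s :=
    fun i j s => differentiableAt_inv_entry (fun i' j' => (hent s i' j').differentiableAt) (hu s) i j
  set N := (A t)⁻¹ with hN
  set E : Matrix (Fin n) (Fin n) ℂ := Matrix.of (fun i j => deriv (fun s => (A s)⁻¹ i j) t) with hEdef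
  have hE : ∀ i j, HasDerivAt (fun s => (A s)⁻¹ i j) (E i j) t :=
    fun i j => (hNdiff i j t).hasDerivAt
  have hdetu : ∀ s, IsUnit (A s).det := fun s => (Matrix.isUnit_iff_isUnit_det (A s)).1 (hu s)
  -- derivative of the entrywise product identity
  have key : A' t * N + A t * E = 0 := by
    ext i j
    have h1 : HasDerivAt (fun s => ∑ k, A s i k * (A s)⁻¹ k j)
        (∑ k, (A' t i k * N k j + A t i k * E k j)) t :=
      HasDerivAt.fun_sum fun k _ => (hent t i k).mul (hE k j)
    have h2 : (fun s => ∑ k, A s i k * (A s)⁻¹ k j) = fun _ => (1 : Matrix (Fin n) (Fin n) ℂ) i j := by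
      funext s
      rw [← Matrix.mul_apply, Matrix.mul_nonsing_inv _ (hdetu s)]
    rw [h2] at h1
    have h3 := h1.unique (hasDerivAt_const t _)
    simp only [Matrix.add_apply, Matrix.mul_apply, Matrix.zero_apply]
    rw [← Finset.sum_add_distrib]
    exact h3
  have hAE : A t * E = -(A' t * N) := by
    rw [add_comm] at key
    exact eq_neg_of_add_eq_zero_left key
  have hEeq : E = -(N * A' t * N) := by
    have := congrArg (fun X => N * X) hAE
    rwa [← Matrix.mul_assoc, Matrix.nonsing_inv_mul _ (hdetu t), Matrix.one_mul,
      Matrix.mul_neg, ← Matrix.mul_assoc] at this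
  rw [← hEeq]
  exact hasDerivAt_pi_mat.2 hE

lemma hasDerivAt_mulVec_comp {A : ℝ → Matrix (Fin n) (Fin n) ℂ} {A' : Matrix (Fin n) (Fin n) ℂ}
    {x : ℝ → (Fin n → ℂ)} {x' : Fin n → ℂ} {t : ℝ}
    (hA : HasDerivAt A A' t) (hx : HasDerivAt x x' t) :
    HasDerivAt (fun s => (A s).mulVec (x s)) (A'.mulVec (x t) + (A t).mulVec x') t := by
  apply hasDerivAt_pi_gen.2
  intro i
  have h : HasDerivAt (fun s => ∑ j, A s i j * x s j)
      (∑ j, (A' i j * x t j + A t i j * x' j)) t :=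
    HasDerivAt.fun_sum fun j _ => (hasDerivAt_pi_mat.1 hA i j).mul (hasDerivAt_pi_gen.1 hx j)
  convert h using 1
  · rfl
  · rfl
  · simp [Matrix.mulVec, dotProduct, Finset.sum_add_distrib]

lemma hasDerivAt_matmul_comp {A B : ℝ → Matrix (Fin n) (Fin n) ℂ}
    {A' B' : Matrix (Fin n) (Fin n) ℂ} {t : ℝ}
    (hA : HasDerivAt A A' t) (hB : HasDerivAt B B' t) :
    HasDerivAt (fun s => A s * B s) (A' * B t + A t * B') t := by
  apply hasDerivAt_pi_mat.2
  intro i j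
  have h : HasDerivAt (fun s => ∑ k, A s i k * B s k j)
      (∑ k, (A' i k * B t k j + A t i k * B' k j)) t :=
    HasDerivAt.fun_sum fun k _ => (hasDerivAt_pi_mat.1 hA i k).mul (hasDerivAt_pi_mat.1 hB k j)
  convert h using 1
  · rfl
  · simp [Matrix.mul_apply, Matrix.add_apply, Finset.sum_add_distrib]

lemma hasDerivAt_conj_comp {f : ℝ → ℂ} {f' : ℂ} {t : ℝ} (h : HasDerivAt f f' t) :
    HasDerivAt (fun s => starRingEnd ℂ (f s)) (starRingEnd ℂ f') t := by
  have := (Complex.conjCLE.toContinuousLinearMap.hasFDerivAt (x := f t)).comp_hasDerivAt t h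
  exact this

lemma hasDerivAt_star_vec {x : ℝ → (Fin n → ℂ)} {x' : Fin n → ℂ} {t : ℝ}
    (h : HasDerivAt x x' t) :
    HasDerivAt (fun s => star (x s)) (star x') t := by
  apply hasDerivAt_pi_gen.2
  intro i
  have := hasDerivAt_conj_comp (hasDerivAt_pi_gen.1 h i)
  exact this

lemma hasDerivAt_mapconj_mat {A : ℝ → Matrix (Fin n) (Fin n) ℂ} {A' : Matrix (Fin n) (Fin n) ℂ}
    {t : ℝ} (h : HasDerivAt A A' t) :
    HasDerivAt (fun s => (A s).map (starRingEnd ℂ)) (A'.map (starRingEnd ℂ)) t := by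
  apply hasDerivAt_pi_mat.2
  intro i j
  exact hasDerivAt_conj_comp (hasDerivAt_pi_mat.1 h i j)

lemma star_mulVec' (A : Matrix (Fin n) (Fin n) ℂ) (x : Fin n → ℂ) :
    star (A.mulVec x) = (A.map (starRingEnd ℂ)).mulVec (star x) := by
  funext i
  simp [Matrix.mulVec, dotProduct, map_sum, mul_comm]

lemma smul_star_I (x : Fin n → ℂ) : Complex.I • star x = -star (Complex.I • x) := by
  funext i
  simp [Complex.ext_iff]

lemma smul_mapconj_I (B : Matrix (Fin n) (Fin n) ℂ) :
    Complex.I • B.map (starRingEnd ℂ) = -((Complex.I • B).map (starRingEnd ℂ)) := by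
  ext i j
  simp [Complex.ext_iff]


lemma conj_half : (starRingEnd ℂ) (1/2 : ℂ) = 1/2 := by
  have h : ((1:ℂ)/2) = ((1/2 : ℝ) : ℂ) := by norm_num
  rw [h, Complex.conj_ofReal]

lemma star_half : star (1/2 : ℂ) = 1/2 := conj_half

lemma mapconj_add (X Y : Matrix (Fin n) (Fin n) ℂ) :
    ((X + Y).map (starRingEnd ℂ)) = X.map (starRingEnd ℂ) + Y.map (starRingEnd ℂ) := by
  ext i j; simp

lemma mapconj_mul (X Y : Matrix (Fin n) (Fin n) ℂ) :
    ((X * Y).map (starRingEnd ℂ)) = X.map (starRingEnd ℂ) * Y.map (starRingEnd ℂ) := by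
  ext i j; simp [Matrix.mul_apply, map_sum]

lemma mapconj_smul (c : ℂ) (X : Matrix (Fin n) (Fin n) ℂ) :
    ((c • X).map (starRingEnd ℂ)) = (starRingEnd ℂ c) • (X.map (starRingEnd ℂ)) := by
  ext i j; simp

/-- Under the FC-transform η = (1 - W W̄)⁻¹(z + W z̄), the coupled equations of
motion on the Siegel-Jacobi ball decouple: η satisfies the linear equation
i η' = ε + ε₋ η̄ + (1/2) ε₀ᵀ η, whose coefficients do not involve W. -/
theorem stmt_19 (n : ℕ) (ε : Fin n → ℂ) (ε₀ εm εp : Matrix (Fin n) (Fin n) ℂ)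
    (h0 : ε₀ᴴ = ε₀) (hm : εmᵀ = εm) (hpt : εpᵀ = εp)
    (hmp : εp = εm.map (starRingEnd ℂ))
    (W : ℝ → Matrix (Fin n) (Fin n) ℂ) (W' : ℝ → Matrix (Fin n) (Fin n) ℂ)
    (z z' : ℝ → (Fin n → ℂ))
    (hsym : ∀ t, (W t)ᵀ = W t)
    (hinv : ∀ t, IsUnit (1 - W t * (W t).map (starRingEnd ℂ)))
    (hWd : ∀ t, HasDerivAt W (W' t) t)
    (hWeq : ∀ t, Complex.I • W' t
        = εm + (1 / 2 : ℂ) • (W t * ε₀ + (W t * ε₀)ᵀ) + W t * εp * W t)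
    (hzd : ∀ t, HasDerivAt z (z' t) t)
    (hzeq : ∀ t, Complex.I • z' t
        = ε + (W t).mulVec (star ε) + (1 / 2 : ℂ) • ε₀ᵀ.mulVec (z t)
          + (W t * εp).mulVec (z t)) :
    ∀ t, HasDerivAt
      (fun s => (1 - W s * (W s).map (starRingEnd ℂ))⁻¹.mulVec
          (z s + (W s).mulVec (star (z s))))
      ((-Complex.I) • (ε
        + εm.mulVec (star ((1 - W t * (W t).map (starRingEnd ℂ))⁻¹.mulVec
            (z t + (W t).mulVec (star (z t)))))
        + (1 / 2 : ℂ) • ε₀ᵀ.mulVec ((1 - W t * (W t).map (starRingEnd ℂ))⁻¹.mulVec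
            (z t + (W t).mulVec (star (z t)))))) t := by
  intro t
  -- entry conjugation facts
  have hc0t : ε₀ᵀ.map (starRingEnd ℂ) = ε₀ := by
    ext i j
    have h := congrFun (congrFun h0 i) j
    rw [Matrix.conjTranspose_apply] at h
    exact h
  have hc0 : ε₀.map (starRingEnd ℂ) = ε₀ᵀ := by
    ext i j
    have h := congrFun (congrFun hc0t j) i
    simpa [Matrix.map_apply, Matrix.transpose_apply] using h
  have hcp : εp.map (starRingEnd ℂ) = εm := by
    rw [hmp]; ext i j; simp
  -- abbreviations
  set A := W t with hAdef
  set A' := W' t with hA'def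
  set v := z t with hvdef
  set v' := z' t with hv'def
  set Ac := A.map (starRingEnd ℂ) with hAcdef
  set A'c := A'.map (starRingEnd ℂ) with hA'cdef
  set Mt := 1 - A * Ac with hMtdef
  set N := Mt⁻¹ with hNdef
  set u := v + A.mulVec (star v) with hudef
  set η := N.mulVec u with hηdef
  set M' := -(A' * Ac + A * A'c) with hM'def
  -- basic invertibility facts
  have hMu : IsUnit Mt := hinv t
  have hdet : IsUnit Mt.det := (Matrix.isUnit_iff_isUnit_det Mt).1 hMu
  have hMN : Mt * N = 1 := Matrix.mul_nonsing_inv _ hdet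
  have hNM : N * Mt = 1 := Matrix.nonsing_inv_mul _ hdet
  have hu_eq : Mt.mulVec η = u := by
    rw [hηdef, Matrix.mulVec_mulVec, hMN, Matrix.one_mulVec]
  -- derivative facts
  have hWcd : ∀ s, HasDerivAt (fun s' => (W s').map (starRingEnd ℂ))
      ((W' s).map (starRingEnd ℂ)) s := fun s => hasDerivAt_mapconj_mat (hWd s)
  have hMd : ∀ s, HasDerivAt (fun s' => 1 - W s' * (W s').map (starRingEnd ℂ))
      (-(W' s * (W s).map (starRingEnd ℂ) + W s * (W' s).map (starRingEnd ℂ))) s := by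
    intro s
    have h1 := hasDerivAt_matmul_comp (hWd s) (hWcd s)
    have h2 := h1.const_sub (1 : Matrix (Fin n) (Fin n) ℂ)
    exact h2
  have hNd : HasDerivAt (fun s => (1 - W s * (W s).map (starRingEnd ℂ))⁻¹)
      (-(N * M' * N)) t :=
    hasDerivAt_inv_mat (A' := fun s =>
      -(W' s * (W s).map (starRingEnd ℂ) + W s * (W' s).map (starRingEnd ℂ))) hMd hinv
  have hustar : HasDerivAt (fun s => star (z s)) (star v') t := hasDerivAt_star_vec (hzd t)
  have hud : HasDerivAt (fun s => z s + (W s).mulVec (star (z s)))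
      (v' + (A'.mulVec (star v) + A.mulVec (star v'))) t :=
    (hzd t).add (hasDerivAt_mulVec_comp (hWd t) hustar)
  have hη : HasDerivAt
      (fun s => (1 - W s * (W s).map (starRingEnd ℂ))⁻¹.mulVec
        (z s + (W s).mulVec (star (z s))))
      ((-(N * M' * N)).mulVec u + N.mulVec (v' + (A'.mulVec (star v) + A.mulVec (star v')))) t :=
    hasDerivAt_mulVec_comp hNd hud
  convert hη using 1
  -- the hypotheses at time t, folded
  have hW' := hWeq t
  have hz' := hzeq t
  rw [← hAdef, ← hA'def] at hW'
  rw [← hAdef, ← hvdef, ← hv'def] at hz'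
  rw [show (A * ε₀)ᵀ = ε₀ᵀ * A by rw [Matrix.transpose_mul, hsym t]] at hW'
  -- conjugate of the z-equation
  have hzc : star (Complex.I • v') = star ε + Ac.mulVec ε
      + (1/2 : ℂ) • ε₀.mulVec (star v) + (Ac * εm).mulVec (star v) := by
    rw [hz']
    simp only [star_add, star_mulVec', star_smul, star_star, Matrix.map_mul, hcp, hc0t,
      star_half, ← hAcdef]
  -- Sub-lemma A : I • u' = Mt ε + ½ ε₀ᵀ u + (A εp) u + (Mt εm) (star v)
  have hA_iu : Complex.I • (v' + (A'.mulVec (star v) + A.mulVec (star v')))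
      = Mt.mulVec ε + (1/2 : ℂ) • ε₀ᵀ.mulVec u + (A * εp).mulVec u
        + (Mt * εm).mulVec (star v) := by
    have expand : Complex.I • (v' + (A'.mulVec (star v) + A.mulVec (star v')))
        = (Complex.I • v') + ((Complex.I • A').mulVec (star v)
          + A.mulVec (-(star (Complex.I • v')))) := by
      rw [smul_add, smul_add, ← Matrix.smul_mulVec, ← Matrix.mulVec_smul, smul_star_I]
    rw [expand, hzc, hz', hW', hMtdef, hudef]
    simp only [Matrix.add_mulVec, Matrix.sub_mulVec, Matrix.smul_mulVec,
      Matrix.mulVec_add, Matrix.mulVec_sub, Matrix.mulVec_smul, Matrix.mulVec_neg,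
      Matrix.neg_mulVec, ← Matrix.mulVec_mulVec, Matrix.one_mulVec, smul_add, smul_neg,
      smul_sub]
    module
  -- conjugate of the W-equation
  have hWc' : (Complex.I • A').map (starRingEnd ℂ)
      = εp + (1/2 : ℂ) • (Ac * ε₀ᵀ + ε₀ * Ac) + Ac * εm * Ac := by
    rw [hW']
    simp only [mapconj_add, mapconj_mul, mapconj_smul, hcp, hc0, hc0t, conj_half,
      ← hAcdef, ← hmp]
  -- Sub-lemma B : I • M' = -(Mt εm Ac) + A εp Mt + ½ ε₀ᵀ Mt - ½ Mt ε₀ᵀ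
  have hB_iM : Complex.I • M'
      = -(Mt * εm * Ac) + A * εp * Mt
        + (1/2 : ℂ) • (ε₀ᵀ * Mt) - (1/2 : ℂ) • (Mt * ε₀ᵀ) := by
    have expand : Complex.I • M'
        = -((Complex.I • A') * Ac) + A * ((Complex.I • A').map (starRingEnd ℂ)) := by
      rw [hM'def, hA'cdef, smul_neg, smul_add, ← smul_mul_assoc,
        show Complex.I • (A * A'.map (starRingEnd ℂ))
          = A * (Complex.I • A'.map (starRingEnd ℂ)) from (mul_smul_comm _ _ _).symm,
        smul_mapconj_I, mul_neg]
      abel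
    rw [expand, hWc', hW', hMtdef]
    simp only [Matrix.mul_add, Matrix.add_mul, Matrix.mul_sub, Matrix.sub_mul,
      Matrix.mul_one, Matrix.one_mul, mul_smul_comm, smul_mul_assoc, Matrix.mul_assoc,
      smul_add, smul_sub, smul_neg, Matrix.neg_mul, Matrix.mul_neg]
    module
  -- Sub-lemma C : star η = star v + Ac η
  have hC : star η = star v + Ac.mulVec η := by
    have hMc : Mt.map (starRingEnd ℂ) = 1 - Ac * A := by
      rw [hMtdef, hAcdef]
      ext i j
      simp [Matrix.map_apply, Matrix.sub_apply, Matrix.one_apply, Matrix.mul_apply,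
        map_sum, apply_ite, mul_comm]
    have hNc' : (N.map (starRingEnd ℂ)) * (Mt.map (starRingEnd ℂ)) = 1 := by
      rw [← Matrix.map_mul, hNM]
      ext i j
      simp [Matrix.map_apply, Matrix.one_apply, apply_ite]
    have hstar_u : star u = star v + Ac.mulVec v := by
      rw [hudef]
      simp [star_add, star_mulVec', star_star, ← hAcdef]
    have hkey : (Mt.map (starRingEnd ℂ)).mulVec (star v + Ac.mulVec η) = star u := by
      have hAAcη : A.mulVec (Ac.mulVec η) = η - u := by
        have h := hu_eq
        rw [hMtdef, Matrix.sub_mulVec, Matrix.one_mulVec, ← Matrix.mulVec_mulVec] at h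
        linear_combination (norm := module) -h
      rw [hMc, hstar_u]
      simp only [Matrix.sub_mulVec, Matrix.one_mulVec, Matrix.mulVec_add,
        ← Matrix.mulVec_mulVec, hAAcη, Matrix.mulVec_sub, hudef, Matrix.mulVec_add]
      module
    have hse : star η = (N.map (starRingEnd ℂ)).mulVec (star u) := by
      rw [hηdef, star_mulVec']
    rw [hse, ← hkey, Matrix.mulVec_mulVec, hNc', Matrix.one_mulVec]
  -- Final assembly
  have hmain : Complex.I • ((-(N * M' * N)).mulVec u
      + N.mulVec (v' + (A'.mulVec (star v) + A.mulVec (star v'))))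
      = ε + εm.mulVec (star η) + (1/2 : ℂ) • ε₀ᵀ.mulVec η := by
    have step1 : (-(N * M' * N)).mulVec u = -(N.mulVec (M'.mulVec η)) := by
      rw [Matrix.neg_mulVec, ← Matrix.mulVec_mulVec, ← Matrix.mulVec_mulVec, ← hηdef]
    have t1 : Complex.I • (N.mulVec (M'.mulVec η))
        = N.mulVec ((Complex.I • M').mulVec η) := by
      rw [Matrix.smul_mulVec, Matrix.mulVec_smul]
    have t2 : Complex.I • (N.mulVec (v' + (A'.mulVec (star v) + A.mulVec (star v'))))
        = N.mulVec (Complex.I • (v' + (A'.mulVec (star v) + A.mulVec (star v')))) :=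
      (Matrix.mulVec_smul _ _ _).symm
    rw [step1, smul_add, smul_neg, t1, t2, hB_iM, hA_iu, hC]
    rw [← hu_eq]
    have inner : Mt.mulVec ε + (1/2 : ℂ) • ε₀ᵀ.mulVec (Mt.mulVec η)
        + (A * εp).mulVec (Mt.mulVec η) + (Mt * εm).mulVec (star v)
        - (-(Mt * εm * Ac) + A * εp * Mt + (1/2 : ℂ) • (ε₀ᵀ * Mt)
            - (1/2 : ℂ) • (Mt * ε₀ᵀ)).mulVec η
        = Mt.mulVec (ε + εm.mulVec (star v + Ac.mulVec η)
            + (1/2 : ℂ) • ε₀ᵀ.mulVec η) := by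
      simp only [Matrix.add_mulVec, Matrix.sub_mulVec, Matrix.neg_mulVec,
        Matrix.smul_mulVec, Matrix.mulVec_add, Matrix.mulVec_sub,
        Matrix.mulVec_smul, ← Matrix.mulVec_mulVec, smul_add, smul_sub, smul_neg]
      module
    rw [neg_add_eq_sub, ← Matrix.mulVec_sub, inner, Matrix.mulVec_mulVec, hNM,
      Matrix.one_mulVec]
  rw [← hmain, smul_smul]
  rw [show (-Complex.I) * Complex.I = 1 by simp [Complex.I_mul_I]]
  rw [one_smul]
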